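/- Let (Ω, Σ, μ) be a finite measure space, X a Banach space, f ∈ L̄₁(Ω, Σ, μ, X) with integrable majorant g ∈ L₁(Ω, Σ, μ). Let {Π_n} be a sequence of partitions of Ω such that for each n the upper integral sum of g over Π_n is absolutely convergent, i.e. Σ_i (sup_{t ∈ Δ_i^{(n)}} g(t)) · μ(Δ_i^{(n)}) < ∞ where Π_n = {Δ_i^{(n)}}. Assume there is x ∈ X such that for any choice of sampling points T_n for Π_n, the sequence S(f, Π_n, T_n) converges to x. Then f is RL-integrable and its RL integral equals x. -/

import Mathlib

open MeasureTheory Set Pointwise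

/-- A countable partition of `A` into pairwise disjoint measurable pieces
(possibly empty, so that finite partitions are included). -/
def IsRLPartition {Ω : Type*} [MeasurableSpace Ω] (A : Set Ω) (P : ℕ → Set Ω) : Prop :=
  (∀ i, MeasurableSet (P i)) ∧ Pairwise (Function.onFun Disjoint P) ∧ (⋃ i, P i) = A

/-- `Γ` is finer than (inscribed into) `P`: every piece of `Γ` is contained in a piece of `P`. -/
def IsFinerPartition {Ω : Type*} (Γ P : ℕ → Set Ω) : Prop :=
  ∀ j, ∃ i, Γ j ⊆ P i

/-- `T` is a choice of sampling points for the partition `P`. -/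
def IsSampling {Ω : Type*} (P : ℕ → Set Ω) (T : ℕ → Ω) : Prop :=
  ∀ i, (P i).Nonempty → T i ∈ P i

/-- The RL integral sum `S(f, P, T) = ∑ᵢ μ(Pᵢ) • f(Tᵢ)`. -/
noncomputable def RLSum {Ω X : Type*} [MeasurableSpace Ω] [NormedAddCommGroup X]
    [NormedSpace ℝ X] (μ : Measure Ω) (f : Ω → X) (P : ℕ → Set Ω) (T : ℕ → Ω) : X :=
  ∑' i, (μ (P i)).toReal • f (T i)

/-- Absolute convergence of the RL integral sum. -/
def RLSumAbsConv {Ω X : Type*} [MeasurableSpace Ω] [NormedAddCommGroup X]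
    (μ : Measure Ω) (f : Ω → X) (P : ℕ → Set Ω) (T : ℕ → Ω) : Prop :=
  Summable fun i => (μ (P i)).toReal * ‖f (T i)‖

/-- `f` is RL-integrable over `A` with RL integral `x`. -/
def HasRLIntegral {Ω X : Type*} [MeasurableSpace Ω] [NormedAddCommGroup X] [NormedSpace ℝ X]
    (μ : Measure Ω) (f : Ω → X) (A : Set Ω) (x : X) : Prop :=
  ∀ ε > 0, ∃ P : ℕ → Set Ω, IsRLPartition A P ∧
    ∀ Γ : ℕ → Set Ω, IsRLPartition A Γ → IsFinerPartition Γ P →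
      ∀ T : ℕ → Ω, IsSampling Γ T →
        RLSumAbsConv μ f Γ T ∧ ‖RLSum μ f Γ T - x‖ < ε

/-- `f` has a Lebesgue-integrable majorant, i.e. `f ∈ L̄₁(Ω, Σ, μ, X)`. -/
def HasIntegrableMajorant {Ω X : Type*} [MeasurableSpace Ω] [NormedAddCommGroup X]
    (μ : Measure Ω) (f : Ω → X) : Prop :=
  ∃ g : Ω → ℝ, Integrable g μ ∧ ∀ t, ‖f t‖ ≤ g t

/-- The limit set `I(f)`: all limit points of the net of absolute RL integral sums. -/
def RLLimitSet {Ω X : Type*} [MeasurableSpace Ω] [NormedAddCommGroup X] [NormedSpace ℝ X]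
    (μ : Measure Ω) (f : Ω → X) : Set X :=
  {x | ∀ ε > 0, ∀ P : ℕ → Set Ω, IsRLPartition Set.univ P →
    ∃ Γ : ℕ → Set Ω, IsRLPartition Set.univ Γ ∧ IsFinerPartition Γ P ∧
      ∃ T : ℕ → Ω, IsSampling Γ T ∧ RLSumAbsConv μ f Γ T ∧ ‖RLSum μ f Γ T - x‖ < ε}

/-- `g` is a Bochner-integrable equivalent of `f`: `g` is Bochner integrable and the
RL integral of `f` over every measurable set equals the Bochner integral of `g` over it. -/
def BochnerEquivalent {Ω X : Type*} [MeasurableSpace Ω] [NormedAddCommGroup X] [NormedSpace ℝ X]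
    (μ : Measure Ω) (f g : Ω → X) : Prop :=
  Integrable g μ ∧ ∀ A : Set Ω, MeasurableSet A → HasRLIntegral μ f A (∫ ω in A, g ω ∂μ)

/-- `f : [0,1] → X` is Riemann integrable with Riemann integral `x`. -/
def HasRiemannIntegral {X : Type*} [NormedAddCommGroup X] [NormedSpace ℝ X]
    (f : ℝ → X) (x : X) : Prop :=
  ∀ ε > 0, ∃ δ > 0, ∀ (n : ℕ) (a : ℕ → ℝ) (t : ℕ → ℝ),
    a 0 = 0 → a n = 1 → (∀ i < n, a i ≤ a (i + 1)) →
    (∀ i < n, a (i + 1) - a i < δ) →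
    (∀ i < n, t i ∈ Set.Icc (a i) (a (i + 1))) →
    ‖(∑ i ∈ Finset.range n, (a (i + 1) - a i) • f (t i)) - x‖ < ε

lemma rl_core
    {Ω X : Type*} [MeasurableSpace Ω] [Nonempty Ω]
    [NormedAddCommGroup X] [NormedSpace ℝ X] [CompleteSpace X]
    (μ : Measure Ω) [IsFiniteMeasure μ] (f : Ω → X) (g : Ω → ℝ)
    (hmaj : ∀ t, ‖f t‖ ≤ g t)
    (Q : ℕ → Set Ω) (hQ : IsRLPartition Set.univ Q)
    (M : ℕ → ℝ) (hM : ∀ i, ∀ t ∈ Q i, g t ≤ M i)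
    (hMsum : Summable fun i => M i * (μ (Q i)).toReal)
    (x : X) (δ : ℝ) (hδ0 : 0 ≤ δ)
    (hδ : ∀ T', IsSampling Q T' → ‖RLSum μ f Q T' - x‖ ≤ δ)
    (Γ : ℕ → Set Ω) (hΓ : IsRLPartition Set.univ Γ) (hfine : IsFinerPartition Γ Q)
    (T : ℕ → Ω) (hT : IsSampling Γ T) :
    RLSumAbsConv μ f Γ T ∧ ‖RLSum μ f Γ T - x‖ ≤ δ := by
  obtain ⟨hQm, hQd, hQu⟩ := hQ
  obtain ⟨hΓm, hΓd, hΓu⟩ := hΓ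
  set M' : ℕ → ℝ := fun i => max (M i) 0 with hM'def
  have hM' : ∀ i, ∀ t ∈ Q i, g t ≤ M' i := fun i t ht => (hM i t ht).trans (le_max_left _ _)
  have hM'0 : ∀ i, 0 ≤ M' i := fun i => le_max_right _ _
  have hM'sum : Summable fun i => M' i * (μ (Q i)).toReal := by
    refine Summable.of_norm_bounded hMsum.abs (fun i => ?_)
    rcases le_or_gt 0 (M i) with h | h
    · simp only [hM'def, max_eq_left h, Real.norm_eq_abs]
      exact le_rfl
    · simp only [hM'def, max_eq_right h.le, zero_mul, norm_zero, abs_nonneg]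
  choose c hc using hfine
  have hμΓfin : ∀ j, μ (Γ j) ≠ ⊤ := fun j => measure_ne_top μ _
  have hμΓsum : Summable fun j => (μ (Γ j)).toReal := by
    refine ENNReal.summable_toReal ?_
    rw [← measure_iUnion hΓd hΓm]
    exact measure_ne_top μ _
  -- each Q i is the union of the Γ j mapped into it
  have hQeq : ∀ i, Q i = ⋃ j : (c ⁻¹' {i} : Set ℕ), Γ (j : ℕ) := by
    intro i
    ext t
    simp only [mem_iUnion]
    constructor
    · intro ht
      have htu : t ∈ ⋃ j, Γ j := by rw [hΓu]; trivial
      obtain ⟨j, htj⟩ := mem_iUnion.mp htu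
      have hcj : c j = i := by
        by_contra hne
        exact (hQd hne).le_bot ⟨hc j htj, ht⟩
      exact ⟨⟨j, hcj⟩, htj⟩
    · rintro ⟨⟨j, hj⟩, htj⟩
      have := hc j htj
      rwa [show c j = i from hj] at this
  have hQμeqE : ∀ i, μ (Q i) = ∑' j : (c ⁻¹' {i} : Set ℕ), μ (Γ (j : ℕ)) := by
    intro i
    rw [hQeq i]
    exact measure_iUnion (fun a b hab => hΓd (fun h => hab (Subtype.ext h)))
      (fun j => hΓm _)
  have hQμeq : ∀ i, (μ (Q i)).toReal = ∑' j : (c ⁻¹' {i} : Set ℕ), (μ (Γ (j : ℕ))).toReal := by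
    intro i
    rw [hQμeqE i, ENNReal.tsum_toReal_eq (fun _ => hμΓfin _)]
  have hbound : ∀ j, (μ (Γ j)).toReal * ‖f (T j)‖ ≤ (μ (Γ j)).toReal * M' (c j) := by
    intro j
    rcases eq_or_ne (μ (Γ j)) 0 with h | h
    · simp [h]
    · have hne : (Γ j).Nonempty := nonempty_of_measure_ne_zero h
      have hTj : T j ∈ Γ j := hT j hne
      exact mul_le_mul_of_nonneg_left
        ((hmaj _).trans (hM' (c j) _ (hc j hTj))) ENNReal.toReal_nonneg
  have hMc_sum : Summable fun j => (μ (Γ j)).toReal * M' (c j) := by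
    refine summable_of_sum_le (c := ∑' i, M' i * (μ (Q i)).toReal)
      (fun j => mul_nonneg ENNReal.toReal_nonneg (hM'0 _)) (fun s => ?_)
    rw [← Finset.sum_fiberwise_of_maps_to (fun j hj => Finset.mem_image_of_mem c hj)
      (fun j => (μ (Γ j)).toReal * M' (c j))]
    have hin : ∀ i ∈ Finset.image c s,
        (∑ j ∈ s.filter (fun j => c j = i), (μ (Γ j)).toReal * M' (c j))
          ≤ M' i * (μ (Q i)).toReal := by
      intro i _
      have h1 : (∑ j ∈ s.filter (fun j => c j = i), (μ (Γ j)).toReal * M' (c j))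
          = (∑ j ∈ s.filter (fun j => c j = i), (μ (Γ j)).toReal) * M' i := by
        rw [Finset.sum_mul]
        refine Finset.sum_congr rfl (fun j hj => ?_)
        rw [(Finset.mem_filter.mp hj).2]
      rw [h1, mul_comm]
      refine mul_le_mul_of_nonneg_left ?_ (hM'0 i)
      have h2 : (∑ j ∈ s.filter (fun j => c j = i), μ (Γ j)) ≤ μ (Q i) := by
        rw [← measure_biUnion_finset (fun a ha b hb hab => hΓd hab) (fun j _ => hΓm j)]
        refine measure_mono (Set.iUnion₂_subset fun j hj => ?_)
        have := hc j
        rwa [(Finset.mem_filter.mp hj).2] at this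
      calc (∑ j ∈ s.filter (fun j => c j = i), (μ (Γ j)).toReal)
          = (∑ j ∈ s.filter (fun j => c j = i), μ (Γ j)).toReal := by
            rw [ENNReal.toReal_sum (fun j _ => hμΓfin j)]
        _ ≤ (μ (Q i)).toReal := ENNReal.toReal_mono (measure_ne_top μ _) h2
    calc (∑ i ∈ Finset.image c s, ∑ j ∈ s.filter (fun j => c j = i),
            (μ (Γ j)).toReal * M' (c j))
        ≤ ∑ i ∈ Finset.image c s, M' i * (μ (Q i)).toReal := Finset.sum_le_sum hin
      _ ≤ ∑' i, M' i * (μ (Q i)).toReal := Summable.sum_le_tsum _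
          (fun i _ => mul_nonneg (hM'0 i) ENNReal.toReal_nonneg) hM'sum
  have habs : RLSumAbsConv μ f Γ T :=
    Summable.of_nonneg_of_le (fun j => mul_nonneg ENNReal.toReal_nonneg (norm_nonneg _))
      hbound hMc_sum
  have hS : Summable fun j => (μ (Γ j)).toReal • f (T j) := by
    refine Summable.of_norm_bounded habs (fun j => ?_)
    rw [norm_smul, Real.norm_eq_abs, abs_of_nonneg ENNReal.toReal_nonneg]
  refine ⟨habs, ?_⟩
  have main : ∀ φ : StrongDual ℝ X, φ (RLSum μ f Γ T - x) ≤ δ * ‖φ‖ := by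
    intro φ
    have hφsum : Summable fun j => (μ (Γ j)).toReal * φ (f (T j)) := by
      have := hS.mapL φ
      simpa only [_root_.map_smul, smul_eq_mul] using this
    have hmap : φ (RLSum μ f Γ T) = ∑' j, (μ (Γ j)).toReal * φ (f (T j)) := by
      rw [RLSum, φ.map_tsum hS]
      simp only [_root_.map_smul, smul_eq_mul]
    refine le_of_forall_pos_le_add (fun η hη => ?_)
    have hchoice : ∀ i : ℕ, ∃ t : Ω, ((Q i).Nonempty → t ∈ Q i) ∧
        (∑' j : (c ⁻¹' {i} : Set ℕ), (μ (Γ (j : ℕ))).toReal * φ (f (T (j : ℕ))))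
          ≤ (μ (Q i)).toReal * φ (f t) + η / 2 / 2 ^ i := by
      intro i
      rcases eq_or_ne (μ (Q i)) 0 with h0 | h0
      · have hz : ∀ j : (c ⁻¹' {i} : Set ℕ),
            (μ (Γ (j : ℕ))).toReal * φ (f (T (j : ℕ))) = 0 := by
          rintro ⟨j, hj⟩
          have hsub : Γ j ⊆ Q i := by
            have := hc j; rwa [show c j = i from hj] at this
          have : μ (Γ j) = 0 := le_antisymm (h0 ▸ measure_mono hsub) (by simp)
          simp [this]
        have hsum0 : (∑' j : (c ⁻¹' {i} : Set ℕ),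
            (μ (Γ (j : ℕ))).toReal * φ (f (T (j : ℕ)))) = 0 := by
          rw [tsum_congr hz, tsum_zero]
        by_cases hne : (Q i).Nonempty
        · refine ⟨hne.some, fun _ => hne.some_mem, ?_⟩
          rw [hsum0, h0]
          simp
          positivity
        · refine ⟨Classical.arbitrary Ω, fun h => absurd h hne, ?_⟩
          rw [hsum0, h0]
          simp
          positivity
      · by_contra hcon
        push_neg at hcon
        set L := ∑' j : (c ⁻¹' {i} : Set ℕ), (μ (Γ (j : ℕ))).toReal * φ (f (T (j : ℕ))) with hL
        set ν := (μ (Q i)).toReal with hν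
        have hν0 : 0 < ν := ENNReal.toReal_pos h0 (measure_ne_top μ _)
        have hη' : (0:ℝ) < η / 2 / 2 ^ i := by positivity
        have key : ∀ j : (c ⁻¹' {i} : Set ℕ),
            (μ (Γ (j : ℕ))).toReal * φ (f (T (j : ℕ)))
              ≤ (μ (Γ (j : ℕ))).toReal * ((L - η / 2 / 2 ^ i) / ν) := by
          rintro ⟨j, hj⟩
          rcases eq_or_ne (μ (Γ j)) 0 with hz | hz
          · simp [hz]
          · have hnej : (Γ j).Nonempty := nonempty_of_measure_ne_zero hz
            have h1 : T j ∈ Γ j := hT j hnej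
            have h2 : T j ∈ Q i := by
              have := hc j h1; rwa [show c j = i from hj] at this
            have h3 := hcon (T j) (fun _ => h2)
            have hlt : φ (f (T j)) < (L - η / 2 / 2 ^ i) / ν := by
              rw [lt_div_iff₀ hν0]
              nlinarith [h3]
            exact mul_le_mul_of_nonneg_left hlt.le ENNReal.toReal_nonneg
        have hsub1 : Summable fun j : (c ⁻¹' {i} : Set ℕ) =>
            (μ (Γ (j : ℕ))).toReal * φ (f (T (j : ℕ))) := hφsum.subtype _
        have hsub2 : Summable fun j : (c ⁻¹' {i} : Set ℕ) => (μ (Γ (j : ℕ))).toReal :=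
          hμΓsum.subtype _
        have hle : L ≤ ν * ((L - η / 2 / 2 ^ i) / ν) := by
          calc L ≤ ∑' j : (c ⁻¹' {i} : Set ℕ),
                (μ (Γ (j : ℕ))).toReal * ((L - η / 2 / 2 ^ i) / ν) :=
              Summable.tsum_le_tsum key hsub1 (hsub2.mul_right _)
            _ = (∑' j : (c ⁻¹' {i} : Set ℕ), (μ (Γ (j : ℕ))).toReal)
                * ((L - η / 2 / 2 ^ i) / ν) := tsum_mul_right
            _ = ν * ((L - η / 2 / 2 ^ i) / ν) := by rw [← hQμeq i]
        rw [mul_div_cancel₀ _ hν0.ne'] at hle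
        linarith
    choose T' hT'mem hT'le using hchoice
    have hsampling : IsSampling Q T' := fun i h => hT'mem i h
    have hQabs : Summable fun i => (μ (Q i)).toReal * ‖f (T' i)‖ := by
      refine Summable.of_nonneg_of_le
        (fun i => mul_nonneg ENNReal.toReal_nonneg (norm_nonneg _)) (fun i => ?_) hM'sum
      by_cases hne : (Q i).Nonempty
      · rw [mul_comm]
        exact mul_le_mul_of_nonneg_right
          ((hmaj _).trans (hM' i _ (hT'mem i hne))) ENNReal.toReal_nonneg
      · have : Q i = ∅ := Set.not_nonempty_iff_eq_empty.mp hne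
        simp [this, mul_nonneg (hM'0 i)]
    have hQS : Summable fun i => (μ (Q i)).toReal • f (T' i) := by
      refine Summable.of_norm_bounded hQabs (fun i => ?_)
      rw [norm_smul, Real.norm_eq_abs, abs_of_nonneg ENNReal.toReal_nonneg]
    have hφQsum : Summable fun i => (μ (Q i)).toReal * φ (f (T' i)) := by
      have := hQS.mapL φ
      simpa only [_root_.map_smul, smul_eq_mul] using this
    have hφQ : φ (RLSum μ f Q T') = ∑' i, (μ (Q i)).toReal * φ (f (T' i)) := by
      rw [RLSum, φ.map_tsum hQS]
      simp only [_root_.map_smul, smul_eq_mul]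
    have hfib : HasSum (fun i => ∑' j : (c ⁻¹' {i} : Set ℕ),
        (μ (Γ (j : ℕ))).toReal * φ (f (T (j : ℕ))))
        (∑' j, (μ (Γ j)).toReal * φ (f (T j))) :=
      hφsum.hasSum.tsum_fiberwise c
    have hgeo : Summable fun i : ℕ => η / 2 / 2 ^ i := summable_geometric_two' η
    have hstep : (∑' j, (μ (Γ j)).toReal * φ (f (T j)))
        ≤ φ (RLSum μ f Q T') + η := by
      calc (∑' j, (μ (Γ j)).toReal * φ (f (T j)))
          = ∑' i, ∑' j : (c ⁻¹' {i} : Set ℕ),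
              (μ (Γ (j : ℕ))).toReal * φ (f (T (j : ℕ))) := hfib.tsum_eq.symm
        _ ≤ ∑' i, ((μ (Q i)).toReal * φ (f (T' i)) + η / 2 / 2 ^ i) :=
            Summable.tsum_le_tsum hT'le hfib.summable (hφQsum.add hgeo)
        _ = (∑' i, (μ (Q i)).toReal * φ (f (T' i))) + ∑' i : ℕ, η / 2 / 2 ^ i :=
            Summable.tsum_add hφQsum hgeo
        _ = φ (RLSum μ f Q T') + η := by rw [hφQ, tsum_geometric_two']
    have hfinal : φ (RLSum μ f Q T') - φ x ≤ δ * ‖φ‖ := by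
      have h1 : φ (RLSum μ f Q T') - φ x = φ (RLSum μ f Q T' - x) := (map_sub φ _ _).symm
      rw [h1]
      calc φ (RLSum μ f Q T' - x) ≤ ‖φ (RLSum μ f Q T' - x)‖ := le_abs_self _
        _ ≤ ‖φ‖ * ‖RLSum μ f Q T' - x‖ := φ.le_opNorm _
        _ ≤ ‖φ‖ * δ := mul_le_mul_of_nonneg_left (hδ T' hsampling) (norm_nonneg φ)
        _ = δ * ‖φ‖ := mul_comm _ _
    have : φ (RLSum μ f Γ T - x) = φ (RLSum μ f Γ T) - φ x := map_sub φ _ _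
    rw [this, hmap]
    linarith
  refine NormedSpace.norm_le_dual_bound ℝ _ hδ0 (fun φ => ?_)
  rw [Real.norm_eq_abs, abs_le]
  constructor
  · have := main (-φ)
    simp only [ContinuousLinearMap.neg_apply, norm_neg] at this
    linarith
  · exact main φ

/-- If `f ∈ L̄₁` has integrable majorant `g`, `(P n)` is a sequence of partitions
of `Ω` whose upper integral sums for `g` converge absolutely, and for every choice of sampling
points `T n` for `P n` the sums `S(f, P n, T n)` converge to `x`, then `f` is RL-integrable
with RL integral `x`. -/
theorem hasRLIntegral_of_seq_partitions
    {Ω X : Type*} [MeasurableSpace Ω] [Nonempty Ω]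
    [NormedAddCommGroup X] [NormedSpace ℝ X] [CompleteSpace X]
    (μ : Measure Ω) [IsFiniteMeasure μ] (f : Ω → X) (g : Ω → ℝ)
    (hg : Integrable g μ) (hmaj : ∀ t, ‖f t‖ ≤ g t)
    (P : ℕ → ℕ → Set Ω) (hP : ∀ n, IsRLPartition Set.univ (P n))
    (hupper : ∀ n, ∃ M : ℕ → ℝ, (∀ i, ∀ t ∈ P n i, g t ≤ M i) ∧
      Summable fun i => M i * (μ (P n i)).toReal)
    (x : X)
    (hconv : ∀ T : ℕ → ℕ → Ω, (∀ n, IsSampling (P n) (T n)) →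
      Filter.Tendsto (fun n => RLSum μ f (P n) (T n)) Filter.atTop (nhds x)) :
    HasRLIntegral μ f Set.univ x := by
  intro ε hε
  have hhalf : (0:ℝ) < ε / 2 := by linarith
  have hA : ∃ n, ∀ T', IsSampling (P n) T' → ‖RLSum μ f (P n) T' - x‖ ≤ ε / 2 := by
    by_contra hcon
    push_neg at hcon
    choose T hT1 hT2 using hcon
    have htend := hconv T hT1
    rw [Metric.tendsto_atTop] at htend
    obtain ⟨N, hN⟩ := htend (ε / 2) hhalf
    have := hN N le_rfl
    rw [dist_eq_norm] at this
    exact absurd this (not_lt.mpr (hT2 N).le)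
  obtain ⟨n, hn⟩ := hA
  obtain ⟨M, hM1, hM2⟩ := hupper n
  refine ⟨P n, hP n, fun Γ hΓ hfine T hT => ?_⟩
  obtain ⟨h1, h2⟩ := rl_core μ f g hmaj (P n) (hP n) M hM1 hM2 x (ε / 2) hhalf.le hn
    Γ hΓ hfine T hT
  exact ⟨h1, lt_of_le_of_lt h2 (by linarith)⟩
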